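/- For every n : ℕ and every family f : Fin n → ((Fin n → ℕ) → ℕ) of total computable functions (each f i is Computable), there exist naturals u : Fin n → ℕ such that for every i, Nat.Partrec.Code.eval (Denumerable.ofNat Nat.Partrec.Code (u i)) = Nat.Partrec.Code.eval (Denumerable.ofNat Nat.Partrec.Code (f i u)) (a simultaneous n-ary form of Kleene's recursion theorem). -/

import Mathlib

open Nat.Partrec Nat.Partrec.Code Encodable Denumerable

/-- Simultaneous n-ary form of Kleene's recursion theorem: for any finite
family `f 1, …, f n` of total computable functions from `ℕⁿ` to `ℕ` there are
naturals `u 1, …, u n` such that, identifying naturals with codes of partial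
recursive functions, the function coded by `u i` equals the function coded by
`f i u` for every `i`. -/
theorem kleene_recursion (n : ℕ) (f : Fin n → (Fin n → ℕ) → ℕ)
    (hf : ∀ i, Computable (f i)) :
    ∃ u : Fin n → ℕ, ∀ i : Fin n,
      Nat.Partrec.Code.eval (Denumerable.ofNat Nat.Partrec.Code (u i)) =
        Nat.Partrec.Code.eval (Denumerable.ofNat Nat.Partrec.Code (f i u)) := by
  -- `d e i` is a code for `x ↦ eval (ofNat Code e) (pair i x)`
  let d : ℕ → ℕ → ℕ := fun e i => encode (curry (ofNat Code e) i)
  have hd : Primrec₂ d :=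
    Primrec.encode.comp
      (primrec₂_curry.comp ((Primrec.ofNat Code).comp Primrec.fst) Primrec.snd)
  -- the tuple of codes extracted from a single code `c`
  let U : Code → Fin n → ℕ := fun c j => d (encode c) (j : ℕ)
  have hU : Computable U := by
    have h : Primrec₂ fun (c : Code) (j : Fin n) => d (encode c) (j : ℕ) :=
      hd.comp (Primrec.encode.comp Primrec.fst) (Primrec.fin_val.comp Primrec.snd)
    exact (Primrec.fin_curry.2 h).to_comp
  -- the list `[f 0 (U c), …, f (n-1) (U c)]`
  let L : Code → List ℕ := fun c => List.ofFn fun i => f i (U c)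
  have hL : Computable L := by
    have h1 : Computable fun c => List.Vector.ofFn (fun i => f i (U c)) :=
      Computable.vector_ofFn fun i => (hf i).comp hU
    exact (Computable.vector_toList.comp h1).of_eq fun c => by
      simp [L, List.Vector.toList_ofFn]
  -- the functional whose fixed point we take
  let F : Code → ℕ →. ℕ := fun c m =>
    eval (ofNat Code ((L c).getD m.unpair.1 0)) m.unpair.2
  have hF : Partrec₂ F := by
    have h1 : Computable fun p : Code × ℕ =>
        ofNat Code ((L p.1).getD p.2.unpair.1 0) :=
      ((Primrec.ofNat Code).to_comp).comp <|
        ((Primrec.list_getD 0).to_comp).comp (hL.comp Computable.fst)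
          (((Primrec.fst.comp Primrec.unpair).comp Primrec.snd).to_comp)
    have h2 : Computable fun p : Code × ℕ => p.2.unpair.2 :=
      ((Primrec.snd.comp Primrec.unpair).comp Primrec.snd).to_comp
    exact eval_part.comp h1 h2
  obtain ⟨c, hc⟩ := fixed_point₂ hF
  refine ⟨U c, fun i => funext fun x => ?_⟩
  have hUci : U c i = encode (curry c i) := by simp [U, d]
  rw [hUci, ofNat_encode, eval_curry, hc]
  show eval (ofNat Code ((L c).getD (Nat.pair i x).unpair.1 0)) (Nat.pair i x).unpair.2 = _
  have : (L c).getD (Nat.pair (i : ℕ) x).unpair.1 0 = f i (U c) := by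
    simp [L, Nat.unpair_pair, List.getD_eq_getElem?_getD]
  rw [this, Nat.unpair_pair]
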